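/- Let Φ : I → ℝ be a convex function on an interval I of positive real numbers, let T, V be bounded linear invertible operators on a complex Hilbert space H, and let 0 < m < M with [m², M²] contained in the interior of I and m‖Tx‖ ≤ ‖Vx‖ ≤ M‖Tx‖ for all x ∈ H. Then for every subgradient selection φ of Φ, ⊙_Φ(V,T) ≥ Φ((m²+M²)/2)|T|² + φ((m²+M²)/2)(|V|² − ((m²+M²)/2)|T|²) in the operator order. -/

import Mathlib

open scoped InnerProductSpace

variable {H : Type*} [NormedAddCommGroup H] [InnerProductSpace ℂ H] [CompleteSpace H]

/-- `X = |VT⁻¹|² = (T*)⁻¹ V* V T⁻¹`. -/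
noncomputable def qX (V T : (H →L[ℂ] H)ˣ) : H →L[ℂ] H :=
  star (↑(T⁻¹) : H →L[ℂ] H) * (star (V : H →L[ℂ] H) * (V : H →L[ℂ] H)) * (↑(T⁻¹) : H →L[ℂ] H)

/-- The quadratic operator perspective `⊙_Φ(V,T) = T* Φ(X) T`. -/
noncomputable def qPersp (Φ : ℝ → ℝ) (V T : (H →L[ℂ] H)ˣ) : H →L[ℂ] H :=
  star (T : H →L[ℂ] H) * cfc Φ (qX V T) * (T : H →L[ℂ] H)

/-- `|T|² = T*T`. -/
noncomputable def modSq (T : (H →L[ℂ] H)ˣ) : H →L[ℂ] H :=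
  star (T : H →L[ℂ] H) * (T : H →L[ℂ] H)

lemma qX_eq (V T : (H →L[ℂ] H)ˣ) :
    qX V T = star ((V : H →L[ℂ] H) * ↑(T⁻¹)) * ((V : H →L[ℂ] H) * ↑(T⁻¹)) := by
  simp [qX, mul_assoc]

lemma qX_isSelfAdjoint (V T : (H →L[ℂ] H)ˣ) : IsSelfAdjoint (qX V T) := by
  rw [qX_eq]; exact IsSelfAdjoint.star_mul_self _

lemma alg_le_qX (V T : (H →L[ℂ] H)ˣ) (m : ℝ)
    (h : ∀ y : H, m * ‖y‖ ≤ ‖((V : H →L[ℂ] H) * ↑(T⁻¹)) y‖) (hm : 0 ≤ m) :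
    algebraMap ℝ (H →L[ℂ] H) (m^2) ≤ qX V T := by
  rw [ContinuousLinearMap.le_def]
  set W : H →L[ℂ] H := (V : H →L[ℂ] H) * ↑(T⁻¹) with hW
  have hq : qX V T = star W * W := qX_eq V T
  constructor
  · rw [hq]
    exact ContinuousLinearMap.isSelfAdjoint_iff_isSymmetric.mp ((IsSelfAdjoint.star_mul_self W).sub
      (IsSelfAdjoint.algebraMap _ (IsSelfAdjoint.all (m^2))))
  · intro y
    rw [ContinuousLinearMap.reApplyInnerSelf]
    have h1 : (qX V T - algebraMap ℝ (H →L[ℂ] H) (m^2)) y = star W (W y) - ((m:ℂ)^2) • y := by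
      simp [hq, Algebra.algebraMap_eq_smul_one, ContinuousLinearMap.mul_apply]
      norm_cast
    rw [h1]
    have h2 : RCLike.re (⟪star W (W y) - ((m:ℂ)^2) • y, y⟫_ℂ) = ‖W y‖^2 - m^2 * ‖y‖^2 := by
      rw [inner_sub_left, ContinuousLinearMap.star_eq_adjoint,
        ContinuousLinearMap.adjoint_inner_left]
      rw [inner_smul_left, map_sub]
      simp [inner_self_eq_norm_sq_to_K, ← Complex.ofReal_pow]
    rw [h2]
    have h3 := pow_le_pow_left₀ (by positivity) (h y) 2
    rw [mul_pow] at h3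
    linarith

lemma qX_le_alg (V T : (H →L[ℂ] H)ˣ) (M : ℝ)
    (h : ∀ y : H, ‖((V : H →L[ℂ] H) * ↑(T⁻¹)) y‖ ≤ M * ‖y‖) (hM : 0 ≤ M) :
    qX V T ≤ algebraMap ℝ (H →L[ℂ] H) (M^2) := by
  rw [ContinuousLinearMap.le_def]
  set W : H →L[ℂ] H := (V : H →L[ℂ] H) * ↑(T⁻¹) with hW
  have hq : qX V T = star W * W := qX_eq V T
  constructor
  · rw [hq]
    exact ContinuousLinearMap.isSelfAdjoint_iff_isSymmetric.mp ((IsSelfAdjoint.algebraMap _ (IsSelfAdjoint.all (M^2))).sub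
      (IsSelfAdjoint.star_mul_self W))
  · intro y
    rw [ContinuousLinearMap.reApplyInnerSelf]
    have h1 : (algebraMap ℝ (H →L[ℂ] H) (M^2) - qX V T) y = ((M:ℂ)^2) • y - star W (W y) := by
      simp [hq, Algebra.algebraMap_eq_smul_one, ContinuousLinearMap.mul_apply]
      norm_cast
    rw [h1]
    have h2 : RCLike.re (⟪((M:ℂ)^2) • y - star W (W y), y⟫_ℂ) = M^2 * ‖y‖^2 - ‖W y‖^2 := by
      rw [inner_sub_left, ContinuousLinearMap.star_eq_adjoint,
        ContinuousLinearMap.adjoint_inner_left]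
      rw [inner_smul_left, map_sub]
      simp [inner_self_eq_norm_sq_to_K, ← Complex.ofReal_pow]
    rw [h2]
    have h3 := pow_le_pow_left₀ (by positivity) (h y) 2
    rw [mul_pow] at h3
    linarith

theorem stmt2 (I : Set ℝ) (hIpos : I ⊆ Set.Ioi 0)
    (Φ : ℝ → ℝ) (hΦ : ConvexOn ℝ I Φ)
    (T V : (H →L[ℂ] H)ˣ) (m M : ℝ) (hm : 0 < m) (hmM : m < M)
    (hsub : Set.Icc (m ^ 2) (M ^ 2) ⊆ interior I)
    (hTV : ∀ x : H, m * ‖(T : H →L[ℂ] H) x‖ ≤ ‖(V : H →L[ℂ] H) x‖ ∧ ‖(V : H →L[ℂ] H) x‖ ≤ M * ‖(T : H →L[ℂ] H) x‖)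
    (φ : ℝ → ℝ) (hφ : ∀ a ∈ interior I, ∀ t ∈ I, Φ a + (t - a) * φ a ≤ Φ t) :
    Φ ((m ^ 2 + M ^ 2) / 2) • modSq T +
      φ ((m ^ 2 + M ^ 2) / 2) • (modSq V - ((m ^ 2 + M ^ 2) / 2) • modSq T) ≤
        qPersp Φ V T := by
  set c : ℝ := (m ^ 2 + M ^ 2) / 2 with hc
  set X : H →L[ℂ] H := qX V T with hX
  have hXsa : IsSelfAdjoint X := qX_isSelfAdjoint V T
  -- the norm bounds for W = V T⁻¹
  have hWbound : ∀ y : H, m * ‖y‖ ≤ ‖((V : H →L[ℂ] H) * ↑(T⁻¹)) y‖ ∧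
      ‖((V : H →L[ℂ] H) * ↑(T⁻¹)) y‖ ≤ M * ‖y‖ := by
    intro y
    have hTy : (↑T : H →L[ℂ] H) ((↑(T⁻¹) : H →L[ℂ] H) y) = y := by
      rw [← ContinuousLinearMap.mul_apply, Units.mul_inv, ContinuousLinearMap.one_apply]
    obtain ⟨h1, h2⟩ := hTV ((↑(T⁻¹) : H →L[ℂ] H) y)
    rw [hTy] at h1 h2
    exact ⟨h1, h2⟩
  have hlow : algebraMap ℝ (H →L[ℂ] H) (m^2) ≤ X :=
    alg_le_qX V T m (fun y => (hWbound y).1) hm.le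
  have hup : X ≤ algebraMap ℝ (H →L[ℂ] H) (M^2) :=
    qX_le_alg V T M (fun y => (hWbound y).2) (hm.trans hmM).le
  have hspec : spectrum ℝ X ⊆ Set.Icc (m^2) (M^2) := fun t ht =>
    ⟨(algebraMap_le_iff_le_spectrum hXsa).1 hlow t ht,
     (le_algebraMap_iff_spectrum_le hXsa).1 hup t ht⟩
  have hcmem : c ∈ Set.Icc (m^2) (M^2) := by
    constructor <;> [nlinarith; nlinarith]
  have hcint : c ∈ interior I := hsub hcmem
  have hΦcont : ContinuousOn Φ (spectrum ℝ X) :=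
    (hΦ.continuousOn_interior).mono (hspec.trans hsub)
  -- the cfc inequality for the affine minorant
  have hg : cfc (fun t : ℝ => Φ c + (t - c) * φ c) X ≤ cfc Φ X := by
    refine cfc_mono (fun t ht => ?_) (by fun_prop) hΦcont
    exact hφ c hcint t (interior_subset (hsub (hspec ht)))
  -- compute the cfc of the affine function
  have haff : cfc (fun t : ℝ => Φ c + (t - c) * φ c) X
      = algebraMap ℝ (H →L[ℂ] H) (Φ c) + φ c • (X - algebraMap ℝ (H →L[ℂ] H) c) := by
    have hfun : (fun t : ℝ => Φ c + (t - c) * φ c) = fun t : ℝ => Φ c + φ c * (t - c) := by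
      funext t; ring
    have hid : cfc (fun t : ℝ => t - c) X = X - algebraMap ℝ (H →L[ℂ] H) c := by
      rw [cfc_sub (R := ℝ) (fun t => t) (fun _ => c) X, cfc_id' ℝ X, cfc_const c X]
    rw [hfun, cfc_const_add (Φ c) (fun t : ℝ => φ c * (t - c)) X,
      cfc_const_mul (φ c) (fun t : ℝ => t - c) X, hid]
  -- conjugation by T
  have hconj : star (↑T : H →L[ℂ] H) *
      (algebraMap ℝ (H →L[ℂ] H) (Φ c) + φ c • (X - algebraMap ℝ (H →L[ℂ] H) c)) * ↑T ≤
      qPersp Φ V T := by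
    rw [← haff]
    exact star_left_conjugate_le_conjugate hg _
  refine le_trans (le_of_eq ?_) hconj
  -- identify the left-hand sides
  have h1 : (↑(T⁻¹) : H →L[ℂ] H) * ↑T = 1 := T.inv_mul
  have h2 : star (↑T : H →L[ℂ] H) * star (↑(T⁻¹) : H →L[ℂ] H) = 1 := by
    rw [← star_mul, h1, star_one]
  have hTXT : star (↑T : H →L[ℂ] H) * X * ↑T = modSq V := by
    show star (↑T : H →L[ℂ] H) * qX V T * ↑T = modSq V
    rw [qX, modSq]
    calc star (↑T : H →L[ℂ] H) * (star (↑(T⁻¹) : H →L[ℂ] H) *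
          (star (↑V : H →L[ℂ] H) * ↑V) * ↑(T⁻¹)) * ↑T
        = (star (↑T : H →L[ℂ] H) * star (↑(T⁻¹) : H →L[ℂ] H)) *
          (star (↑V : H →L[ℂ] H) * ↑V) * ((↑(T⁻¹) : H →L[ℂ] H) * ↑T) := by
          simp only [mul_assoc]
      _ = star (↑V : H →L[ℂ] H) * ↑V := by rw [h2, h1, one_mul, mul_one]
  rw [Algebra.algebraMap_eq_smul_one, Algebra.algebraMap_eq_smul_one]
  rw [mul_add, add_mul, mul_smul_comm, smul_mul_assoc, mul_one, mul_smul_comm, smul_mul_assoc,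
    mul_sub, sub_mul, mul_smul_comm, smul_mul_assoc, mul_one, hTXT]
  rw [modSq]
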